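/- Correctness of the two-phase average consensus: with inputs s_i ∈ {0,...,q-1}, modulus p > n(q-1), masks a_i from exchanged values r_{ij} as above, and effective inputs s̃_i = (s_i + a_i) mod p, the quantity ((Σ_i s̃_i) mod p)/n (computed over the rationals) equals the true average (Σ_i s_i)/n. -/

import Mathlib

/-- Correctness of the two-phase private average consensus: with integer inputs
`s i ∈ {0,…,q-1}`, modulus `p > n(q-1)`, masks `a i = (∑_{j∈N_i} (r j i - r i j)) mod p` and
effective inputs `s̃ i = (s i + a i) mod p`, the quantity `((∑ i, s̃ i) mod p) / n` computed
over the rationals equals the true average `(∑ i, s i) / n`. -/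
theorem two_phase_average_correct {n : ℕ} (hn : 1 ≤ n) (q p : ℤ) (hq : 1 < q)
    (hp : n * (q - 1) < p)
    (G : SimpleGraph (Fin n)) [DecidableRel G.Adj]
    (r : Fin n → Fin n → ℤ) (hr : ∀ i j, 0 ≤ r i j ∧ r i j < p)
    (s a stilde : Fin n → ℤ)
    (hsrange : ∀ i, 0 ≤ s i ∧ s i ≤ q - 1)
    (ha : ∀ i, a i = (∑ j ∈ G.neighborFinset i, (r j i - r i j)) % p)
    (hstilde : ∀ i, stilde i = (s i + a i) % p) :
    (((∑ i, stilde i) % p : ℤ) : ℚ) / n = ((∑ i, s i : ℤ) : ℚ) / n := by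
  have hA : ∑ i, ∑ j ∈ G.neighborFinset i, (r j i - r i j) = 0 := by
    have e : ∀ i : Fin n, ∑ j ∈ G.neighborFinset i, (r j i - r i j)
        = ∑ j, if G.Adj i j then r j i - r i j else 0 := by
      intro i
      rw [← Finset.sum_filter]
      apply Finset.sum_congr _ (fun _ _ => rfl)
      ext j
      simp [SimpleGraph.mem_neighborFinset]
    set S := ∑ i, ∑ j, (if G.Adj i j then r j i - r i j else 0) with hS
    have hneg : S = -S := by
      conv_lhs => rw [hS, Finset.sum_comm]
      rw [← Finset.sum_neg_distrib]
      apply Finset.sum_congr rfl; intro j _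
      rw [← Finset.sum_neg_distrib]
      apply Finset.sum_congr rfl; intro i _
      by_cases h : G.Adj i j
      · rw [if_pos h, if_pos (G.adj_symm h)]; ring
      · rw [if_neg h, if_neg (fun hh => h (G.adj_symm hh))]; ring
    have hS0 : S = 0 := by linarith
    calc ∑ i, ∑ j ∈ G.neighborFinset i, (r j i - r i j)
        = S := Finset.sum_congr rfl fun i _ => e i
      _ = 0 := hS0
  have hppos : 0 < p := lt_of_le_of_lt
    (mul_nonneg (by positivity) (by linarith)) hp
  have hs0 : 0 ≤ ∑ i, s i := Finset.sum_nonneg fun i _ => (hsrange i).1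
  have hsb : ∑ i, s i < p := by
    calc ∑ i, s i ≤ ∑ _i : Fin n, (q - 1) :=
          Finset.sum_le_sum fun i _ => (hsrange i).2
      _ = n * (q - 1) := by simp [Finset.sum_const, mul_comm]; ring
      _ < p := hp
  have hSa : (∑ i, a i) % p = 0 := by
    have e1 : ∑ i, a i = ∑ i, ((∑ j ∈ G.neighborFinset i, (r j i - r i j)) % p) :=
      Finset.sum_congr rfl fun i _ => ha i
    rw [e1, ← Finset.sum_int_mod, hA, Int.zero_emod]
  have hkey : (∑ i, stilde i) % p = ∑ i, s i := by
    have e1 : ∑ i, stilde i = ∑ i, ((s i + a i) % p) :=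
      Finset.sum_congr rfl fun i _ => hstilde i
    rw [e1, ← Finset.sum_int_mod, Finset.sum_add_distrib, Int.add_emod, hSa, add_zero,
      Int.emod_emod_of_dvd _ dvd_rfl, Int.emod_eq_of_lt hs0 hsb]
  rw [hkey]
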